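/- For all integers m, n ≥ 1, there exist a bidirected tree T that is a bidirected star with center x_0 and m+n leaves, and a set R of m+n requests of length 1 in T (m converging requests of the form (y, x_0) and n diverging requests of the form (x_0, y'), over disjoint sets of leaves y and y'), such that the interference graph I(R,T) is isomorphic to the complete bipartite graph K_{m,n}. -/

import Mathlib

open SimpleGraph

/-- A request in a bidirected tree `T`: a directed path of length at least 1,
encoded as a path (walk without vertex repetition) in the underlying tree. -/
structure Request {V : Type*} (T : SimpleGraph V) where
  s : V
  t : V
  toWalk : T.Walk s t
  isPath : toWalk.IsPath
  one_le_length : 1 ≤ toWalk.length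

namespace Request

variable {V : Type*} {T : SimpleGraph V}

/-- The second vertex `s_r⁺` of a request. -/
def sPlus (r : Request T) : V := r.toWalk.getVert 1

/-- The penultimate vertex `t_r⁻` of a request. -/
def tMinus (r : Request T) : V := r.toWalk.getVert (r.toWalk.length - 1)

end Request

variable {V : Type*}

/-- `r` interferes on `r'` if the unique path from `s_r` to `t_{r'}` in the tree `T`
has first arc the emission arc of `r` and last arc the reception arc of `r'`. -/
def InterferesOn (T : SimpleGraph V) (r r' : Request T) : Prop :=
  ∃ p : T.Walk r.s r'.t, p.IsPath ∧ 1 ≤ p.length ∧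
    p.getVert 1 = r.sPlus ∧ p.getVert (p.length - 1) = r'.tMinus

/-- Two requests interfere if one of them interferes on the other. -/
def Interfere (T : SimpleGraph V) (r r' : Request T) : Prop :=
  InterferesOn T r r' ∨ InterferesOn T r' r

/-- `x` is an ancestor of `y` in the tree `T` rooted at `z`:
`x` lies on the unique path from `z` to `y`. -/
def Ancestor (T : SimpleGraph V) (z x y : V) : Prop :=
  ∃ p : T.Walk z y, p.IsPath ∧ x ∈ p.support

/-- Two vertices are related if one is an ancestor of the other. -/
def Related (T : SimpleGraph V) (z x y : V) : Prop :=
  Ancestor T z x y ∨ Ancestor T z y x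

/-- A request is converging (w.r.t. root `z`) if all its arcs are directed towards `z`,
i.e. the head of every arc is an ancestor of its tail. -/
def Converging (T : SimpleGraph V) (z : V) (r : Request T) : Prop :=
  ∀ i < r.toWalk.length, Ancestor T z (r.toWalk.getVert (i+1)) (r.toWalk.getVert i)

/-- A request is diverging (w.r.t. root `z`) if all its arcs are directed away from `z`,
i.e. the tail of every arc is an ancestor of its head. -/
def Diverging (T : SimpleGraph V) (z : V) (r : Request T) : Prop :=
  ∀ i < r.toWalk.length, Ancestor T z (r.toWalk.getVert i) (r.toWalk.getVert (i+1))

/-- A request is unimodal (w.r.t. root `z`) if it is neither converging nor diverging. -/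
def Unimodal (T : SimpleGraph V) (z : V) (r : Request T) : Prop :=
  ¬ Converging T z r ∧ ¬ Diverging T z r

/-- `m` is the middle of the request `r` (w.r.t. root `z`): the vertex of `r`
closest to the root, i.e. the vertex of `r` which is an ancestor of every vertex of `r`. -/
def IsMiddle (T : SimpleGraph V) (z : V) (r : Request T) (m : V) : Prop :=
  m ∈ r.toWalk.support ∧ ∀ y ∈ r.toWalk.support, Ancestor T z m y

/-- The interference graph of a family of requests: two (indices of) requests are
adjacent iff they are distinct and the requests interfere. -/
def interferenceGraph (T : SimpleGraph V) {ι : Type*} (f : ι → Request T) :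
    SimpleGraph ι where
  Adj i j := i ≠ j ∧ Interfere T (f i) (f j)
  symm := by
    refine ⟨fun i j h => ?_⟩
    exact ⟨h.1.symm, h.2.symm⟩
  loopless := by
    refine ⟨fun i h => ?_⟩
    exact h.1 rfl

/-- The interference graph of a set of requests. -/
def interGraph (T : SimpleGraph V) (R : Set (Request T)) : SimpleGraph ↥R :=
  interferenceGraph T (fun r => (r : Request T))

/-- The pair `(a, b)` is an arc joining two consecutive vertices of the
bidirected path corresponding to the walk `p` (in either direction). -/
def ArcOn (T : SimpleGraph V) {u v : V} (p : T.Walk u v) (a b : V) : Prop :=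
  ∃ j < p.length, (p.getVert j = a ∧ p.getVert (j+1) = b) ∨
    (p.getVert j = b ∧ p.getVert (j+1) = a)

/-- The request `r` shares an arc with the bidirected path corresponding to
the walk `p`. -/
def SharesArc (T : SimpleGraph V) {u v : V} (p : T.Walk u v) (r : Request T) : Prop :=
  ∃ i < r.toWalk.length, ArcOn T p (r.toWalk.getVert i) (r.toWalk.getVert (i+1))

/-- A leaf of a tree: a vertex with at most one neighbour. -/
def IsLeaf (T : SimpleGraph V) (y : V) : Prop :=
  {w | T.Adj y w}.Subsingleton

/-- A comparability graph: there is a partial order on the vertices such that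
two distinct vertices are adjacent iff they are comparable. -/
def IsComparabilityGraph {α : Type*} (G : SimpleGraph α) : Prop :=
  ∃ le : α → α → Prop, IsPartialOrder α le ∧ ∀ a b, G.Adj a b ↔ a ≠ b ∧ (le a b ∨ le b a)

/-- A cobipartite graph: the vertex set can be partitioned into two cliques. -/
def IsCobipartite {α : Type*} (G : SimpleGraph α) : Prop :=
  ∃ A : Set α, G.IsClique A ∧ G.IsClique Aᶜ

section StarAux

open SimpleGraph

lemma walk_getVert_injOn {W : Type*} {G : SimpleGraph W} {u v : W} {p : G.Walk u v}
    (hp : p.IsPath) :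
    ∀ i j, i ≤ p.length → j ≤ p.length → p.getVert i = p.getVert j → i = j := by
  induction p with
  | nil => intro i j hi hj _; simp at hi hj; omega
  | @cons u w v h q ih =>
    rw [Walk.cons_isPath_iff] at hp
    intro i j hi hj hij
    match i, j with
    | 0, 0 => rfl
    | 0, k+1 =>
      exfalso
      apply hp.2
      rw [Walk.mem_support_iff_exists_getVert]
      refine ⟨k, ?_, ?_⟩
      · simpa [Walk.getVert_cons_succ] using hij.symm
      · simp only [Walk.length_cons] at hj; omega
    | k+1, 0 =>
      exfalso
      apply hp.2
      rw [Walk.mem_support_iff_exists_getVert]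
      refine ⟨k, ?_, ?_⟩
      · simpa [Walk.getVert_cons_succ] using hij
      · simp only [Walk.length_cons] at hi; omega
    | k+1, l+1 =>
      have := ih hp.1 k l (by simp only [Walk.length_cons] at hi; omega)
        (by simp only [Walk.length_cons] at hj; omega)
        (by simpa [Walk.getVert_cons_succ] using hij)
      omega

variable (α : Type)

/-- The star graph with centre `none` and leaves `some a`. -/
def starG : SimpleGraph (Option α) where
  Adj u v := u ≠ v ∧ (u = none ∨ v = none)
  symm := ⟨fun u v h => ⟨h.1.symm, h.2.symm⟩⟩
  loopless := ⟨fun u h => h.1 rfl⟩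

variable {α}

@[simp] lemma starG_adj (u v : Option α) :
    (starG α).Adj u v ↔ u ≠ v ∧ (u = none ∨ v = none) := Iff.rfl

lemma starG_adj_some_none (a : α) : (starG α).Adj (some a) none :=
  ⟨by simp, Or.inr rfl⟩

lemma starG_adj_none_some (a : α) : (starG α).Adj none (some a) :=
  ⟨by simp, Or.inl rfl⟩

/-- Converging request: from leaf `a` to the centre. -/
def reqConv (a : α) : Request (starG α) where
  s := some a
  t := none
  toWalk := Walk.cons (starG_adj_some_none a) Walk.nil
  isPath := by
    refine Walk.IsPath.cons (Walk.IsPath.nil) ?_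
    simp
  one_le_length := by simp

/-- Diverging request: from the centre to leaf `a`. -/
def reqDiv (a : α) : Request (starG α) where
  s := none
  t := some a
  toWalk := Walk.cons (starG_adj_none_some a) Walk.nil
  isPath := by
    refine Walk.IsPath.cons (Walk.IsPath.nil) ?_
    simp
  one_le_length := by simp

@[simp] lemma reqConv_sPlus (a : α) : (reqConv a).sPlus = none := rfl
@[simp] lemma reqConv_tMinus (a : α) : (reqConv a).tMinus = some a := rfl
@[simp] lemma reqDiv_sPlus (a : α) : (reqDiv a).sPlus = some a := rfl
@[simp] lemma reqDiv_tMinus (a : α) : (reqDiv a).tMinus = none := rfl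
@[simp] lemma reqConv_s (a : α) : (reqConv a).s = some a := rfl
@[simp] lemma reqConv_t (a : α) : (reqConv a).t = none := rfl
@[simp] lemma reqDiv_s (a : α) : (reqDiv a).s = none := rfl
@[simp] lemma reqDiv_t (a : α) : (reqDiv a).t = some a := rfl

lemma notInterferes_conv {a b : α} (hab : a ≠ b) :
    ¬ InterferesOn (starG α) (reqConv a) (reqConv b) := by
  rintro ⟨p, hp, h1, h2, h3⟩
  simp only [reqConv_sPlus, reqConv_tMinus] at h2 h3
  -- p : Walk (some a) none; getVert 1 = none = getVert length
  have hlen : 1 = p.length := by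
    refine walk_getVert_injOn hp 1 p.length h1 le_rfl ?_
    rw [h2, p.getVert_length]
    rfl
  rw [← hlen] at h3
  have h0 : p.getVert (1 - 1) = some a := p.getVert_zero
  rw [h0] at h3
  exact hab (Option.some_injective α h3)

lemma notInterferes_div {a b : α} (hab : a ≠ b) :
    ¬ InterferesOn (starG α) (reqDiv a) (reqDiv b) := by
  rintro ⟨p, hp, h1, h2, h3⟩
  simp only [reqDiv_sPlus, reqDiv_tMinus] at h2 h3
  -- p : Walk none (some b); getVert (length - 1) = none = getVert 0
  have hlen : p.length - 1 = 0 := by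
    refine walk_getVert_injOn hp (p.length - 1) 0 (by omega) (by omega) ?_
    rw [h3, p.getVert_zero]
    rfl
  have hl1 : p.length = 1 := by omega
  have : p.getVert 1 = some b := by rw [← hl1]; exact p.getVert_length
  rw [h2] at this
  exact hab (Option.some_injective α this)

lemma notInterferes_mixed (a b : α) :
    ¬ InterferesOn (starG α) (reqDiv a) (reqConv b) := by
  rintro ⟨p, hp, h1, _, _⟩
  -- p : Walk none none with length ≥ 1, impossible for a path
  have : (0 : ℕ) = p.length := by
    refine walk_getVert_injOn hp 0 p.length (by omega) le_rfl ?_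
    rw [p.getVert_zero, p.getVert_length]
    rfl
  omega

lemma interferes_conv_div {a b : α} (hab : a ≠ b) :
    InterferesOn (starG α) (reqConv a) (reqDiv b) := by
  refine ⟨Walk.cons (starG_adj_some_none a)
    (Walk.cons (starG_adj_none_some b) Walk.nil), ?_, ?_, ?_, ?_⟩
  · refine Walk.IsPath.cons (Walk.IsPath.cons Walk.IsPath.nil (by simp)) ?_
    simp [hab]
  · simp
  · rfl
  · rfl

end StarAux

open SimpleGraph in
/-- Corollary 21 (construction): for all `m, n ≥ 1` there are a bidirected star `T`
with centre `x₀` and `m + n` leaves, and `m + n` requests of length 1 in `T`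
(`m` converging ones of the form `(y, x₀)` and `n` diverging ones of the form
`(x₀, y')`, over disjoint sets of leaves), whose interference graph is
isomorphic to `K_{m,n}`. -/
theorem star_interference_iso_completeBipartite (m n : ℕ) (hm : 1 ≤ m) (hn : 1 ≤ n) :
    ∃ (V : Type) (T : SimpleGraph V) (x₀ : V),
      T.IsTree ∧
      (∀ u v : V, T.Adj u v → u = x₀ ∨ v = x₀) ∧
      Nat.card V = m + n + 1 ∧
      ∃ f : Fin m ⊕ Fin n → Request T,
        Function.Injective f ∧
        (∀ i : Fin m, (f (Sum.inl i)).t = x₀ ∧ (f (Sum.inl i)).toWalk.length = 1) ∧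
        (∀ j : Fin n, (f (Sum.inr j)).s = x₀ ∧ (f (Sum.inr j)).toWalk.length = 1) ∧
        (∀ (i : Fin m) (j : Fin n), (f (Sum.inl i)).s ≠ (f (Sum.inr j)).t) ∧
        (∀ i i' : Fin m, i ≠ i' → (f (Sum.inl i)).s ≠ (f (Sum.inl i')).s) ∧
        (∀ j j' : Fin n, j ≠ j' → (f (Sum.inr j)).t ≠ (f (Sum.inr j')).t) ∧
        Nonempty (interferenceGraph T f ≃g completeBipartiteGraph (Fin m) (Fin n)) := by
  classical
  set α := (Fin m ⊕ Fin n) with hα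
  refine ⟨Option α, starG α, none, ?_, ?_, ?_, ?_⟩
  · -- tree
    constructor
    · -- connected
      have hreach : ∀ u : Option α, (starG α).Reachable u none := by
        intro u
        match u with
        | none => exact Reachable.refl none
        | some a => exact (starG_adj_some_none a).reachable
      refine ⟨fun u v => (hreach u).trans (hreach v).symm⟩
    · -- acyclic
      intro v c hc
      have h3 := hc.three_le_length
      cases c with
      | nil => simp at h3
      | cons h q =>
        rename_i w
        rw [Walk.cons_isCycle_iff] at hc
        have hq : q.IsPath := hc.1
        have hql : 2 ≤ q.length := by simp only [Walk.length_cons] at h3; omega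
        match v, w with
        | none, none => exact h.1 rfl
        | none, some a =>
          -- q : Walk (some a) none, path, length ≥ 2
          have hadj := q.adj_getVert_succ (i := 0) (by omega)
          rw [q.getVert_zero] at hadj
          have h1 : q.getVert 1 = none := by
            rcases hadj.2 with h' | h'
            · exact absurd h' (by simp)
            · exact h'
          have : 1 = q.length := by
            refine walk_getVert_injOn hq 1 q.length (by omega) le_rfl ?_
            rw [h1, q.getVert_length]
          omega
        | some a, none =>
          -- q : Walk none (some a), path, length ≥ 2
          have hadj := q.adj_getVert_succ (i := 1) (by omega)
          have h1 : q.getVert 1 ≠ none := by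
            intro hcon
            have : 0 = 1 := by
              refine walk_getVert_injOn hq 0 1 (by omega) (by omega) ?_
              rw [q.getVert_zero, hcon]
            omega
          have h2 : q.getVert 2 = none := by
            rcases hadj.2 with h' | h'
            · exact absurd h' h1
            · exact h'
          have : 0 = 2 := by
            refine walk_getVert_injOn hq 0 2 (by omega) (by omega) ?_
            rw [q.getVert_zero, h2]
          omega
        | some a, some b =>
          rcases h.2 with h' | h' <;> simp at h'
  · -- star shape
    intro u v huv
    rcases huv.2 with h' | h'
    · exact Or.inl h'
    · exact Or.inr h'
  · -- cardinality
    simp [hα, Nat.card_eq_fintype_card]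
  · -- requests
    refine ⟨Sum.elim (fun i => reqConv (Sum.inl i)) (fun j => reqDiv (Sum.inr j)),
      ?_, ?_, ?_, ?_, ?_, ?_, ?_⟩
    · -- injective
      intro x y hxy
      match x, y with
      | Sum.inl i, Sum.inl i' =>
        have := congrArg Request.s hxy
        simp only [Sum.elim_inl] at this
        exact Option.some_injective _ this
      | Sum.inl i, Sum.inr j =>
        have := congrArg Request.s hxy
        simp only [Sum.elim_inl, Sum.elim_inr] at this
        simp at this
      | Sum.inr j, Sum.inl i =>
        have := congrArg Request.s hxy
        simp only [Sum.elim_inl, Sum.elim_inr] at this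
        simp at this
      | Sum.inr j, Sum.inr j' =>
        have := congrArg Request.t hxy
        simp only [Sum.elim_inr] at this
        exact Option.some_injective _ this
    · intro i; exact ⟨rfl, rfl⟩
    · intro j; exact ⟨rfl, rfl⟩
    · intro i j
      simp only [Sum.elim_inl, Sum.elim_inr]
      intro hcon
      simp at hcon
    · intro i i' hii'
      simp only [Sum.elim_inl]
      intro hcon
      exact hii' (Sum.inl.inj (Option.some_injective _ hcon))
    · intro j j' hjj'
      simp only [Sum.elim_inr]
      intro hcon
      exact hjj' (Sum.inr.inj (Option.some_injective _ hcon))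
    · -- isomorphism
      refine ⟨⟨Equiv.refl _, ?_⟩⟩
      intro x y
      simp only [Equiv.refl_apply, completeBipartiteGraph]
      match x, y with
      | Sum.inl i, Sum.inl i' =>
        simp only [interferenceGraph]
        constructor
        · intro hcon; simp at hcon
        · rintro ⟨hne, hint⟩
          exfalso
          have hii' : i ≠ i' := by rintro rfl; exact hne rfl
          have hab : (Sum.inl i : α) ≠ Sum.inl i' := by simp [hii']
          simp only [Sum.elim_inl] at hint
          rcases hint with h' | h'
          · exact notInterferes_conv hab h'
          · exact notInterferes_conv hab.symm h'
      | Sum.inl i, Sum.inr j =>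
        simp only [interferenceGraph]
        constructor
        · intro _
          refine ⟨by simp, ?_⟩
          simp only [Sum.elim_inl, Sum.elim_inr]
          exact Or.inl (interferes_conv_div (by simp))
        · intro _; simp
      | Sum.inr j, Sum.inl i =>
        simp only [interferenceGraph]
        constructor
        · intro _
          refine ⟨by simp, ?_⟩
          simp only [Sum.elim_inl, Sum.elim_inr]
          exact Or.inr (interferes_conv_div (by simp))
        · intro _; simp
      | Sum.inr j, Sum.inr j' =>
        simp only [interferenceGraph]
        constructor
        · intro hcon; simp at hcon
        · rintro ⟨hne, hint⟩
          exfalso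
          have hjj' : j ≠ j' := by rintro rfl; exact hne rfl
          have hab : (Sum.inr j : α) ≠ Sum.inr j' := by simp [hjj']
          simp only [Sum.elim_inr] at hint
          rcases hint with h' | h'
          · exact notInterferes_div hab h'
          · exact notInterferes_div hab.symm h'
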